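/- The minimum of χ over ℤ^V equals the minimum of χ over {l ∈ ℤ^V : l ≥ 0} (both minima exist). -/
import Mathlib


/-- Cast an integer-valued lattice point into the rational vector space `V → ℚ`. -/
def toQ {V : Type*} (l : V → ℤ) : V → ℚ := fun v => (l v : ℚ)

set_option linter.unusedSectionVars false

section Aux

variable {V : Type*} [Fintype V] [DecidableEq V]

lemma toQ_single (v : V) : toQ (Pi.single v (1 : ℤ)) = Pi.single v (1 : ℚ) := by
  funext w
  simp [toQ, Pi.single_apply, apply_ite (Int.cast : ℤ → ℚ)]

lemma toQ_sub (l k : V → ℤ) : toQ (l - k) = toQ l - toQ k := by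
  funext w; simp [toQ]

lemma pi_eq_sum_single' (x : V → ℚ) : x = ∑ v, x v • (Pi.single v 1 : V → ℚ) := by
  funext j
  simp [Finset.sum_apply, Pi.single_apply]

lemma expand1 (B : LinearMap.BilinForm ℚ (V → ℚ)) (x y : V → ℚ) :
    B x y = ∑ v, x v * B (Pi.single v 1) y := by
  conv_lhs => rw [pi_eq_sum_single' x]
  simp [map_sum, LinearMap.sum_apply, map_smul, LinearMap.smul_apply, smul_eq_mul]

lemma expand2 (B : LinearMap.BilinForm ℚ (V → ℚ)) (x y : V → ℚ) :
    B x y = ∑ v, ∑ w, x v * y w * B (Pi.single v 1) (Pi.single w 1) := by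
  rw [expand1]
  refine Finset.sum_congr rfl fun v _ => ?_
  conv_lhs => rw [pi_eq_sum_single' y]
  rw [map_sum, Finset.mul_sum]
  refine Finset.sum_congr rfl fun w _ => ?_
  rw [map_smul, smul_eq_mul]
  ring

lemma int_pair (B : LinearMap.BilinForm ℚ (V → ℚ))
    (hint : ∀ v w : V, ∃ n : ℤ, B (Pi.single v 1) (Pi.single w 1) = (n : ℚ))
    (l k : V → ℤ) : ∃ n : ℤ, B (toQ l) (toQ k) = (n : ℚ) := by
  choose N hN using hint
  refine ⟨∑ v, ∑ w, l v * k w * N v w, ?_⟩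
  rw [expand2]
  push_cast
  refine Finset.sum_congr rfl fun v _ => Finset.sum_congr rfl fun w _ => ?_
  rw [hN]
  simp [toQ]

lemma B_self_nonpos (B : LinearMap.BilinForm ℚ (V → ℚ))
    (hneg : ∀ x : V → ℚ, x ≠ 0 → B x x < 0) (y : V → ℚ) : B y y ≤ 0 := by
  rcases eq_or_ne y 0 with h | h
  · simp [h]
  · exact (hneg y h).le

/-- global lower bound for χ -/
lemma chi_lb (B : LinearMap.BilinForm ℚ (V → ℚ))
    (hsymm : ∀ x y : V → ℚ, B x y = B y x)
    (hneg : ∀ x : V → ℚ, x ≠ 0 → B x x < 0)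
    (ZK : V → ℚ) (x : V → ℚ) :
    B ZK ZK / 8 ≤ -(B x (x - ZK)) / 2 := by
  have h := B_self_nonpos B hneg (x - (1/2 : ℚ) • ZK)
  simp only [map_sub, map_smul, LinearMap.sub_apply, LinearMap.smul_apply,
    smul_eq_mul] at h ⊢
  have hs := hsymm ZK x
  linarith

/-- decomposition χ(x - y) = χ(x) + χ(-y) + B x y -/
lemma chi_decomp (B : LinearMap.BilinForm ℚ (V → ℚ))
    (hsymm : ∀ x y : V → ℚ, B x y = B y x)
    (ZK : V → ℚ) (x y : V → ℚ) :
    -(B (x - y) (x - y - ZK)) / 2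
      = -(B x (x - ZK)) / 2 + -(B (-y) (-y - ZK)) / 2 + B x y := by
  simp only [map_sub, map_neg, LinearMap.sub_apply, LinearMap.neg_apply, neg_sub,
    neg_neg]
  have h1 := hsymm y x
  linarith

lemma B_parts_nonneg (B : LinearMap.BilinForm ℚ (V → ℚ))
    (hoff : ∀ v w : V, v ≠ w → 0 ≤ B (Pi.single v 1) (Pi.single w 1))
    (a b : V → ℤ) (ha : 0 ≤ a) (hb : 0 ≤ b) (hdisj : ∀ v, a v * b v = 0) :
    0 ≤ B (toQ a) (toQ b) := by
  rw [expand2]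
  refine Finset.sum_nonneg fun v _ => Finset.sum_nonneg fun w _ => ?_
  rcases eq_or_ne v w with rfl | hvw
  · have : toQ a v * toQ b v = 0 := by
      have := hdisj v
      simp only [toQ]
      exact_mod_cast (by exact_mod_cast this : (a v : ℚ) * (b v : ℚ) = 0)
    rw [this, zero_mul]
  · have h1 : (0:ℚ) ≤ toQ a v := by
      simp only [toQ]
      exact_mod_cast (by simpa using ha v : (0:ℤ) ≤ a v)
    have h2 : (0:ℚ) ≤ toQ b w := by
      simp only [toQ]
      exact_mod_cast (by simpa using hb w : (0:ℤ) ≤ b w)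
    exact mul_nonneg (mul_nonneg h1 h2) (hoff v w hvw)

/-- key induction: χ(-m) ≥ 0 for m ≥ 0 integral -/
lemma chi_neg_nonneg (B : LinearMap.BilinForm ℚ (V → ℚ))
    (hsymm : ∀ x y : V → ℚ, B x y = B y x)
    (hint : ∀ v w : V, ∃ n : ℤ, B (Pi.single v 1) (Pi.single w 1) = (n : ℚ))
    (hneg : ∀ x : V → ℚ, x ≠ 0 → B x x < 0)
    (ZK : V → ℚ)
    (hZK : ∀ v : V, B ZK (Pi.single v 1) = B (Pi.single v 1) (Pi.single v 1) + 2) :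
    ∀ n : ℕ, ∀ m : V → ℤ, 0 ≤ m → (∑ v, m v) = (n : ℤ) →
      0 ≤ -(B (-(toQ m)) (-(toQ m) - ZK)) / 2 := by
  intro n
  induction n with
  | zero =>
    intro m hm hsum
    have hm0 : ∀ v, m v = 0 := by
      intro v
      have h1 : ∀ w ∈ Finset.univ, (0:ℤ) ≤ m w := fun w _ => hm w
      have := (Finset.sum_eq_zero_iff_of_nonneg h1).mp (by simpa using hsum) v
        (Finset.mem_univ v)
      exact this
    have : toQ m = 0 := by funext v; simp [toQ, hm0 v]
    simp [this]
  | succ n ih =>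
    intro m hm hsum
    -- m ≠ 0
    have hmne : toQ m ≠ 0 := by
      intro h
      have h0 : ∀ v, m v = 0 := by
        intro v
        have := congrFun h v
        simpa [toQ] using this
      simp [h0] at hsum
      omega
    -- find v with m v > 0 and B (single v 1) (toQ m) < 0
    have hxx : B (toQ m) (toQ m) < 0 := hneg _ hmne
    have hex : ∃ v, 0 < m v ∧ B (Pi.single v 1) (toQ m) < 0 := by
      by_contra hc
      push_neg at hc
      have : 0 ≤ B (toQ m) (toQ m) := by
        rw [expand1]
        refine Finset.sum_nonneg fun v _ => ?_
        have hmv : (0:ℤ) ≤ m v := by simpa using hm v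
        rcases hmv.lt_or_eq with hv | hv
        · refine mul_nonneg ?_ (hc v hv)
          simp only [toQ]
          exact_mod_cast hv.le
        · have : toQ m v = 0 := by simp [toQ, ← hv]
          rw [this, zero_mul]
      linarith
    obtain ⟨v, hv, hBv⟩ := hex
    -- integrality: B (single v 1) (toQ m) ≤ -1
    obtain ⟨k, hk⟩ := int_pair B hint (Pi.single v 1) m
    rw [toQ_single] at hk
    have hk0 : (k : ℚ) < 0 := by rw [← hk]; exact hBv
    have hkneg : k ≤ -1 := by
      have : k < 0 := by exact_mod_cast hk0
      omega
    have hBle : B (Pi.single v 1) (toQ m) ≤ -1 := by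
      rw [hk]
      exact_mod_cast hkneg
    -- m' := m - single v 1
    set m' : V → ℤ := m - Pi.single v 1 with hm'def
    have hm' : 0 ≤ m' := by
      intro w
      rcases eq_or_ne w v with rfl | hwv
      · simp [hm'def, Pi.single_apply]
        omega
      · simp [hm'def, Pi.single_apply, hwv]
        exact hm w
    have hsum' : (∑ w, m' w) = (n : ℤ) := by
      simp only [hm'def, Pi.sub_apply, Finset.sum_sub_distrib]
      rw [hsum]
      have : (∑ w, (Pi.single v (1:ℤ)) w) = 1 := by
        simp [Pi.single_apply]
      rw [this]
      push_cast
      ring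
    have IH := ih m' hm' hsum'
    -- rewrite toQ m = toQ m' + single v 1
    have hx : toQ m = toQ m' + Pi.single v 1 := by
      rw [hm'def, toQ_sub, toQ_single]
      ring
    rw [hx] at hBle ⊢
    simp only [map_add, map_neg, map_sub, LinearMap.add_apply, LinearMap.neg_apply,
      LinearMap.sub_apply, neg_add, neg_neg, neg_sub] at hBle IH ⊢
    have hs1 := hsymm (Pi.single v (1:ℚ)) (toQ m')
    have hs2 := hsymm (Pi.single v (1:ℚ)) ZK
    have hz := hZK v
    linarith
end Aux

/-- The minimum of `χ` over `ℤ^V` equals the minimum of `χ` over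
`{l ∈ ℤ^V : l ≥ 0}` (both minima exist). -/
theorem chi_min_eq_min_effective
    {V : Type*} [Fintype V] [Nonempty V] [DecidableEq V]
    (B : LinearMap.BilinForm ℚ (V → ℚ))
    (hsymm : ∀ x y : V → ℚ, B x y = B y x)
    (hint : ∀ v w : V, ∃ n : ℤ, B (Pi.single v 1) (Pi.single w 1) = (n : ℚ))
    (hoff : ∀ v w : V, v ≠ w → 0 ≤ B (Pi.single v 1) (Pi.single w 1))
    (hneg : ∀ x : V → ℚ, x ≠ 0 → B x x < 0)
    (ZK : V → ℚ)
    (hZK : ∀ v : V, B ZK (Pi.single v 1) = B (Pi.single v 1) (Pi.single v 1) + 2)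
    (χ : (V → ℚ) → ℚ)
    (hχ : ∀ x : V → ℚ, χ x = -(B x (x - ZK)) / 2) :
    ∃ μ : ℚ,
      IsLeast (Set.range (fun l : V → ℤ => χ (toQ l))) μ ∧
      IsLeast ((fun l : V → ℤ => χ (toQ l)) '' {l | 0 ≤ l}) μ := by
  classical
  -- half-integrality of values
  have hhalf : ∀ l : V → ℤ, ∃ n : ℤ, (n : ℚ) = 2 * χ (toQ l) := by
    intro l
    obtain ⟨a, ha⟩ := int_pair B hint l l
    have hZ : ∃ b : ℤ, B (toQ l) ZK = (b : ℚ) := by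
      choose N hN using hint
      refine ⟨∑ v, l v * (N v v + 2), ?_⟩
      rw [expand1]
      push_cast
      refine Finset.sum_congr rfl fun v _ => ?_
      have h1 : B (Pi.single v 1) ZK = B (Pi.single v 1) (Pi.single v 1) + 2 := by
        rw [← hsymm, hZK v]
      rw [h1, hN]
      simp [toQ]
    obtain ⟨b, hb⟩ := hZ
    refine ⟨-a + b, ?_⟩
    rw [hχ]
    simp only [map_sub]
    push_cast
    rw [ha, hb]
    ring
  -- lower bound
  have hlb : ∀ l : V → ℤ, B ZK ZK / 8 ≤ χ (toQ l) := by
    intro l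
    rw [hχ]
    exact chi_lb B hsymm hneg ZK (toQ l)
  -- set of twice-values
  set P : ℤ → Prop := fun n => ∃ l : V → ℤ, (n : ℚ) = 2 * χ (toQ l) with hP
  have Hbdd : ∃ b : ℤ, ∀ z : ℤ, P z → b ≤ z := by
    refine ⟨⌈2 * (B ZK ZK / 8)⌉, fun z hz => ?_⟩
    obtain ⟨l, hl⟩ := hz
    rw [Int.ceil_le, hl]
    have := hlb l
    linarith
  have Hinh : ∃ z : ℤ, P z := by
    obtain ⟨n, hn⟩ := hhalf 0
    exact ⟨n, 0, hn⟩
  obtain ⟨n₀, ⟨l₀, hl₀⟩, hleast⟩ := Int.exists_least_of_bdd Hbdd Hinh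
  refine ⟨(n₀ : ℚ) / 2, ?_, ?_⟩
  · constructor
    · refine ⟨l₀, ?_⟩
      show χ (toQ l₀) = (n₀ : ℚ) / 2
      linarith [hl₀]
    · rintro y ⟨l, rfl⟩
      obtain ⟨n, hn⟩ := hhalf l
      have h1 : n₀ ≤ n := hleast n ⟨l, hn⟩
      have h2 : (n₀ : ℚ) ≤ (n : ℚ) := by exact_mod_cast h1
      simp only
      linarith [hn]
  · -- effective part
    set a : V → ℤ := fun v => max (l₀ v) 0 with hadef
    set b : V → ℤ := fun v => max (-(l₀ v)) 0 with hbdef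
    have ha : 0 ≤ a := fun v => le_max_right _ _
    have hb : 0 ≤ b := fun v => le_max_right _ _
    have hab : l₀ = a - b := by
      funext v
      simp only [hadef, hbdef, Pi.sub_apply]
      omega
    have hdisj : ∀ v, a v * b v = 0 := by
      intro v
      simp only [hadef, hbdef]
      rcases le_total (l₀ v) 0 with h | h
      · rw [max_eq_right h, zero_mul]
      · rw [max_eq_right (by omega : -(l₀ v) ≤ 0), mul_zero]
    -- χ(toQ a) ≤ χ(toQ l₀)
    have hkey : χ (toQ a) ≤ χ (toQ l₀) := by
      have hdec := chi_decomp B hsymm ZK (toQ a) (toQ b)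
      have hBab := B_parts_nonneg B hoff a b ha hb hdisj
      have hneg' : 0 ≤ -(B (-(toQ b)) (-(toQ b) - ZK)) / 2 := by
        refine chi_neg_nonneg B hsymm hint hneg ZK hZK (∑ v, b v).toNat b hb ?_
        rw [Int.toNat_of_nonneg (Finset.sum_nonneg fun v _ => hb v)]
      rw [hχ, hχ, hab, toQ_sub]
      rw [hdec]
      linarith
    have hmem : χ (toQ a) = (n₀ : ℚ) / 2 := by
      have h1 : χ (toQ l₀) = (n₀ : ℚ) / 2 := by linarith [hl₀]
      obtain ⟨n, hn⟩ := hhalf a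
      have h2 : n₀ ≤ n := hleast n ⟨a, hn⟩
      have h3 : (n₀ : ℚ) ≤ (n : ℚ) := by exact_mod_cast h2
      -- χ (toQ a) ≥ μ and ≤ μ
      linarith [hn, hkey, h1]
    constructor
    · exact ⟨a, ha, hmem⟩
    · rintro y ⟨l, _, rfl⟩
      obtain ⟨n, hn⟩ := hhalf l
      have h1 : n₀ ≤ n := hleast n ⟨l, hn⟩
      have h2 : (n₀ : ℚ) ≤ (n : ℚ) := by exact_mod_cast h1
      simp only
      linarith [hn]
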